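/- Let n, b be positive integers, let g : 𝔽₂^[b] → 𝔽₂ be a gadget, let δ ≥ 0 satisfy |ĝ(S)| ≤ δ for all S ⊆ [b], and set E = (1+2δ)^n − 1. Let A ⊆ 𝔂₂^{[n]×[b]} be a nonempty safe affine subspace of codimension m and let z ∈ 𝔽₂^[n]. Then the number of points x ∈ 𝔽₂^{[n]×[b]} with x ∈ A and G(x) = z satisfies |#(A ∩ G⁻¹(z)) − 2^{nb−n−m}| ≤ E · 2^{nb−n−m} (as real numbers). -/

import Mathlib

open Finset

noncomputable section

abbrev F2 : Type := ZMod 2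

/-- Restriction of `x` to block `i`. -/
def blk {ι : Type*} {b : ℕ} (x : (ι × Fin b) → F2) (i : ι) : Fin b → F2 := fun j => x (i, j)

/-- The lifted gadget map `G(x)_i = g(x(i))`. -/
def liftG {n b : ℕ} (g : (Fin b → F2) → F2) (x : (Fin n × Fin b) → F2) : Fin n → F2 :=
  fun i => g (blk x i)

/-- Fourier coefficient of `h : 𝔽₂^J → 𝔽₂` at `T ⊆ J`. -/
def hatFC {J : Type*} [Fintype J] [DecidableEq J] (h : (J → F2) → F2) (T : Finset J) : ℝ :=
  ((2 : ℝ) ^ (Fintype.card J))⁻¹ *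
    ∑ x : J → F2, (-1 : ℝ) ^ ((h x).val + ∑ j ∈ T, (x j).val)

/-- A set of vectors of the lifted space (blocks indexed by `ι`) is safe if any `k`
linearly independent vectors in its span have supports meeting at least `k` blocks. -/
def IsSafeSet {ι : Type*} {b : ℕ} (Vs : Set ((ι × Fin b) → F2)) : Prop :=
  ∀ (k : ℕ) (w : Fin k → ((ι × Fin b) → F2)),
    (∀ m, w m ∈ Submodule.span F2 Vs) → LinearIndependent F2 w →
    k ≤ ({i : ι | ∃ m j, w m (i, j) ≠ 0} : Set ι).ncard

/-- The annihilator `L(A)` of an affine subspace: all linear forms vanishing on its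
direction. -/
def annih {ι : Type*} [Fintype ι] {b : ℕ}
    (A : AffineSubspace F2 ((ι × Fin b) → F2)) : Set ((ι × Fin b) → F2) :=
  {l | ∀ w ∈ A.direction, ∑ p : ι × Fin b, l p * w p = 0}

/-- A (nonempty) affine subspace is safe if its annihilator is safe. -/
def IsSafeAffine {ι : Type*} [Fintype ι] {b : ℕ}
    (A : AffineSubspace F2 ((ι × Fin b) → F2)) : Prop :=
  IsSafeSet (annih A)

/-- Codimension of an affine subspace of the lifted space. -/
def codim {ι : Type*} [Fintype ι] {b : ℕ}
    (A : AffineSubspace F2 ((ι × Fin b) → F2)) : ℕ :=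
  Fintype.card ι * b - Module.finrank F2 A.direction

/-- Standard basis vector at coordinate `p`. -/
def stdv {ι : Type*} [DecidableEq ι] {b : ℕ} (p : ι × Fin b) : (ι × Fin b) → F2 :=
  fun q => if q = p then 1 else 0

/-- A set of blocks `S` is acceptable for a subspace `W` if one can pick one coordinate
in each block of `S` so that no nonzero 𝔽₂-linear combination of the corresponding
standard basis vectors lies in `W`. -/
def AcceptableFor {ι : Type*} [DecidableEq ι] {b : ℕ}
    (W : Submodule F2 ((ι × Fin b) → F2)) (S : Finset ι) : Prop :=
  ∃ c : ι → Fin b, ∀ T ⊆ S, T.Nonempty → (∑ s ∈ T, stdv (s, c s)) ∉ W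

/-- `âcl(A)`: the maximum size of a set of blocks acceptable for the direction of `A`. -/
def acl {ι : Type*} [Fintype ι] [DecidableEq ι] {b : ℕ}
    (A : AffineSubspace F2 ((ι × Fin b) → F2)) : ℕ :=
  sSup {k | ∃ S : Finset ι, S.card = k ∧ AcceptableFor A.direction S}

/-- `v[∖T]`: restriction of `v` to the coordinates of blocks outside `T`. -/
def restrictOut {n b : ℕ} (T : Finset (Fin n)) (v : (Fin n × Fin b) → F2) :
    ({i : Fin n // i ∉ T} × Fin b) → F2 :=
  fun p => v (p.1.1, p.2)

/-- `T` is a deviolator for `A` if `{ℓ[∖T] : ℓ ∈ L(A)}` is safe. -/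
def IsDeviolator {n b : ℕ} (A : AffineSubspace F2 ((Fin n × Fin b) → F2))
    (T : Finset (Fin n)) : Prop :=
  IsSafeSet (restrictOut T '' annih A)

/-- A closure of `A` is a deviolator of minimum cardinality. -/
def IsClosure {n b : ℕ} (A : AffineSubspace F2 ((Fin n × Fin b) → F2))
    (T : Finset (Fin n)) : Prop :=
  IsDeviolator A T ∧ ∀ T', IsDeviolator A T' → T.card ≤ T'.card

/-- `C_y`: the set of points agreeing with `y` on all coordinates of blocks in `T`. -/
def cube {n b : ℕ} (T : Finset (Fin n)) (y : ({i : Fin n // i ∈ T} × Fin b) → F2) :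
    Set ((Fin n × Fin b) → F2) :=
  {x | ∀ (i : Fin n) (hi : i ∈ T) (j : Fin b), x (i, j) = y (⟨i, hi⟩, j)}

/-- The point of the lifted space equal to `y` on the blocks of `T` and to `x` elsewhere. -/
def glue {n b : ℕ} (T : Finset (Fin n)) (y : ({i : Fin n // i ∈ T} × Fin b) → F2)
    (x : ({i : Fin n // i ∉ T} × Fin b) → F2) : (Fin n × Fin b) → F2 :=
  fun p => if h : p.1 ∈ T then y (⟨p.1, h⟩, p.2) else x (⟨p.1, h⟩, p.2)

-- helpers
def sgn (a : F2) : ℝ := (-1 : ℝ) ^ a.val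

lemma F2cases (a : F2) : a = 0 ∨ a = 1 := by revert a; decide

lemma sgn_zero : sgn 0 = 1 := by simp [sgn]

lemma sgn_one : sgn 1 = -1 := by rw [sgn, show (1 : F2).val = 1 from rfl, pow_one]

lemma sgn_add (a c : F2) : sgn (a + c) = sgn a * sgn c := by
  rcases F2cases a with h | h <;> rcases F2cases c with h' | h' <;>
    subst h <;> subst h' <;>
    simp only [show (1 + 1 : F2) = 0 from by decide, add_zero, zero_add, sgn_zero, sgn_one] <;> ring

lemma abs_sgn (a : F2) : |sgn a| = 1 := by
  rcases F2cases a with h | h <;> subst h <;> simp [sgn_zero, sgn_one]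

lemma sgn_sum {ι : Type*} [DecidableEq ι] (s : Finset ι) (f : ι → F2) :
    sgn (∑ i ∈ s, f i) = ∏ i ∈ s, sgn (f i) := by
  induction s using Finset.induction with
  | empty => simp [sgn_zero]
  | insert _ _ h ih => rw [Finset.sum_insert h, Finset.prod_insert h, sgn_add, ih]

lemma sgn_natpow (a : F2) : sgn a = (-1 : ℝ) ^ a.val := rfl

/-- Orthogonality: sum over all subsets. -/
lemma sum_sgn_subsets {J : Type*} [Fintype J] [DecidableEq J] (u : J → F2) :
    ∑ T : Finset J, sgn (∑ j ∈ T, u j) =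
      if u = 0 then (2 : ℝ) ^ (Fintype.card J) else 0 := by
  have h1 : ∀ T : Finset J, sgn (∑ j ∈ T, u j) = ∏ j ∈ T, sgn (u j) :=
    fun T => sgn_sum T u
  have h2 : ∏ j : J, (sgn (u j) + 1) =
      ∑ T ∈ (Finset.univ : Finset J).powerset, (∏ j ∈ T, sgn (u j)) * ∏ j ∈ Finset.univ \ T, (1:ℝ) :=
    Finset.prod_add _ _ _
  simp only [Finset.prod_const_one, mul_one] at h2
  have h3 : ∑ T : Finset J, sgn (∑ j ∈ T, u j) = ∏ j : J, (sgn (u j) + 1) := by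
    rw [h2, ← Finset.powerset_univ]
    exact Finset.sum_congr rfl fun T _ => h1 T
  rw [h3]
  by_cases hu : u = 0
  · subst hu
    rw [if_pos rfl]
    simp only [Pi.zero_apply, sgn_zero]
    norm_num
  · have : ∃ j, u j ≠ 0 := by
      by_contra h
      push_neg at h
      exact hu (funext fun j => h j)
    obtain ⟨j0, hj0⟩ := this
    rw [if_neg hu]
    apply Finset.prod_eq_zero (Finset.mem_univ j0)
    rcases F2cases (u j0) with h | h
    · exact absurd h hj0
    · rw [h, sgn_one]; ring

lemma hatFC_eq {J : Type*} [Fintype J] [DecidableEq J] (h : (J → F2) → F2) (T : Finset J) :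
    hatFC h T = ((2 : ℝ) ^ (Fintype.card J))⁻¹ *
      ∑ x : J → F2, sgn (h x) * sgn (∑ j ∈ T, x j) := by
  unfold hatFC
  congr 1
  refine Finset.sum_congr rfl fun x _ => ?_
  rw [pow_add, sgn_sum, ← Finset.prod_pow_eq_pow_sum]
  rfl

lemma F2_add_eq_zero (a c : F2) : a + c = 0 ↔ a = c := by revert a c; decide

lemma fourier_inv {J : Type*} [Fintype J] [DecidableEq J] (h : (J → F2) → F2) (y : J → F2) :
    sgn (h y) = ∑ T : Finset J, hatFC h T * sgn (∑ j ∈ T, y j) := by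
  have hc : (0:ℝ) < 2 ^ (Fintype.card J) := by positivity
  have key : ∀ x : J → F2, ∑ T : Finset J, sgn (∑ j ∈ T, x j) * sgn (∑ j ∈ T, y j)
      = if x = y then (2:ℝ) ^ (Fintype.card J) else 0 := by
    intro x
    have hss := sum_sgn_subsets (fun j => x j + y j)
    have e1 : ∀ T : Finset J, sgn (∑ j ∈ T, (x j + y j))
        = sgn (∑ j ∈ T, x j) * sgn (∑ j ∈ T, y j) := by
      intro T; rw [Finset.sum_add_distrib, sgn_add]
    have e2 : ((fun j => x j + y j) = 0) ↔ x = y := by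
      constructor
      · intro hxy; funext j
        exact (F2_add_eq_zero _ _).1 (congrFun hxy j)
      · intro hxy; subst hxy; funext j
        exact (F2_add_eq_zero _ _).2 rfl
    rw [show (∑ T : Finset J, sgn (∑ j ∈ T, x j) * sgn (∑ j ∈ T, y j))
        = ∑ T : Finset J, sgn (∑ j ∈ T, (x j + y j)) from
      (Finset.sum_congr rfl fun T _ => (e1 T)).symm, hss]
    simp only [e2]
  symm
  calc ∑ T : Finset J, hatFC h T * sgn (∑ j ∈ T, y j)
      = ∑ T : Finset J, ((2:ℝ)^(Fintype.card J))⁻¹ *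
          ∑ x : J → F2, sgn (h x) * (sgn (∑ j ∈ T, x j) * sgn (∑ j ∈ T, y j)) := by
        refine Finset.sum_congr rfl fun T _ => ?_
        rw [hatFC_eq, mul_assoc]
        congr 1
        rw [Finset.sum_mul]
        exact Finset.sum_congr rfl fun x _ => by ring
    _ = ((2:ℝ)^(Fintype.card J))⁻¹ * ∑ x : J → F2, sgn (h x) *
          ∑ T : Finset J, sgn (∑ j ∈ T, x j) * sgn (∑ j ∈ T, y j) := by
        rw [← Finset.mul_sum, Finset.sum_comm]
        congr 1
        exact Finset.sum_congr rfl fun x _ => (Finset.mul_sum _ _ _).symm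
    _ = sgn (h y) := by
        simp_rw [key]
        simp only [mul_ite, mul_zero]
        rw [Finset.sum_ite_eq' Finset.univ y (fun x => sgn (h x) * (2:ℝ)^(Fintype.card J))]
        simp only [Finset.mem_univ, if_true]
        field_simp


section Aux

variable {n b : ℕ}

def ip {n b : ℕ} (l x : (Fin n × Fin b) → F2) : F2 := ∑ p, l p * x p

lemma ip_add_right (l x y : (Fin n × Fin b) → F2) : ip l (x + y) = ip l x + ip l y := by
  unfold ip
  rw [← Finset.sum_add_distrib]
  exact Finset.sum_congr rfl fun p _ => by rw [Pi.add_apply, mul_add]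

lemma ip_add_left (l l' x : (Fin n × Fin b) → F2) : ip (l + l') x = ip l x + ip l' x := by
  unfold ip
  rw [← Finset.sum_add_distrib]
  exact Finset.sum_congr rfl fun p _ => by rw [Pi.add_apply, add_mul]

open Classical in
lemma char_sum0 (W : Submodule F2 ((Fin n × Fin b) → F2)) [Fintype W]
    (l : (Fin n × Fin b) → F2) :
    ∑ w : W, sgn (ip l w) =
      if (∀ w ∈ W, ip l w = 0) then (Fintype.card W : ℝ) else 0 := by
  by_cases hl : ∀ w ∈ W, ip l w = 0
  · rw [if_pos hl, Finset.sum_congr rfl (fun w _ => by rw [hl w w.2, sgn_zero])]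
    simp [Finset.card_univ]
  · rw [if_neg hl]
    push_neg at hl
    obtain ⟨w0, hw0W, hw0⟩ := hl
    have hw0' : ip l w0 = 1 := by
      rcases F2cases (ip l w0) with h | h
      · exact absurd h hw0
      · exact h
    have key : ∀ w : W, sgn (ip l ↑w) = - sgn (ip l ↑(w + ⟨w0, hw0W⟩)) := by
      intro w
      rw [Submodule.coe_add, ip_add_right, sgn_add, hw0', sgn_one]
      ring
    have hflip : (∑ w : W, sgn (ip l ↑w)) = ∑ w : W, - sgn (ip l ↑w) :=
      Fintype.sum_equiv (Equiv.addRight (⟨w0, hw0W⟩ : W)) _ _ (fun x => key x)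
    have h1 : (∑ w : W, sgn (ip l ↑w)) = - ∑ w : W, sgn (ip l ↑w) := by
      conv_lhs => rw [hflip]
      rw [Finset.sum_neg_distrib]
    linarith

/-- Subspace of annihilator vectors supported on blocks in `α`. -/
def suppSub (A : AffineSubspace F2 ((Fin n × Fin b) → F2)) (α : Finset (Fin n)) :
    Submodule F2 ((Fin n × Fin b) → F2) where
  carrier := {l | (∀ w ∈ A.direction, ip l w = 0) ∧
      ∀ p : Fin n × Fin b, p.1 ∉ α → l p = 0}
  add_mem' := by
    rintro l l' ⟨h1, h2⟩ ⟨h1', h2'⟩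
    refine ⟨fun w hw => ?_, fun p hp => ?_⟩
    · rw [ip_add_left, h1 w hw, h1' w hw, add_zero]
    · show l p + l' p = 0
      rw [h2 p hp, h2' p hp, add_zero]
  zero_mem' := by
    refine ⟨fun w hw => ?_, fun p hp => rfl⟩
    unfold ip
    simp
  smul_mem' := by
    rintro c l ⟨h1, h2⟩
    rcases F2cases c with h | h <;> subst h
    · rw [zero_smul]
      refine ⟨fun w hw => ?_, fun p hp => rfl⟩
      unfold ip
      simp
    · rw [one_smul]
      exact ⟨h1, h2⟩

lemma mem_suppSub {A : AffineSubspace F2 ((Fin n × Fin b) → F2)} {α : Finset (Fin n)}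
    {l : (Fin n × Fin b) → F2} :
    l ∈ suppSub A α ↔ ((∀ w ∈ A.direction, ip l w = 0) ∧
      ∀ p : Fin n × Fin b, p.1 ∉ α → l p = 0) := Iff.rfl

lemma card_suppSub_le (A : AffineSubspace F2 ((Fin n × Fin b) → F2))
    (hAsafe : IsSafeAffine A) (α : Finset (Fin n)) [Fintype (suppSub A α)] :
    Fintype.card (suppSub A α) ≤ 2 ^ α.card := by
  classical
  set k := Module.finrank F2 (suppSub A α) with hk
  let bU : Module.Basis (Fin k) F2 (suppSub A α) := Module.finBasis F2 (suppSub A α)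
  set w : Fin k → ((Fin n × Fin b) → F2) := fun m' => (bU m' : (Fin n × Fin b) → F2) with hw
  have hmem : ∀ m', w m' ∈ Submodule.span F2 (annih A) := fun m' =>
    Submodule.subset_span ((mem_suppSub.mp (bU m').2).1)
  have hli : LinearIndependent F2 w :=
    bU.linearIndependent.map' (suppSub A α).subtype (Submodule.ker_subtype _)
  have hsafe := hAsafe k w hmem hli
  have hsub : {i : Fin n | ∃ m' j, w m' (i, j) ≠ 0} ⊆ (α : Set (Fin n)) := by
    rintro i ⟨m', j, hne⟩
    by_contra hi
    exact hne ((mem_suppSub.mp (bU m').2).2 (i, j) hi)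
  have hcard : ({i : Fin n | ∃ m' j, w m' (i, j) ≠ 0} : Set (Fin n)).ncard ≤ α.card := by
    have := Set.ncard_le_ncard hsub (α.finite_toSet)
    rwa [Set.ncard_coe_finset] at this
  have hk2 : k ≤ α.card := le_trans hsafe hcard
  have hcardU : Fintype.card (suppSub A α) = 2 ^ k := by
    have := Module.card_eq_pow_finrank (K := F2) (V := (suppSub A α))
    rwa [ZMod.card 2] at this
  rw [hcardU]
  exact Nat.pow_le_pow_right (by norm_num) hk2

lemma char_sum_card (W : Submodule F2 ((Fin n × Fin b) → F2)) [Fintype W]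
    (l : (Fin n × Fin b) → F2) (hl : ∀ w ∈ W, ip l w = 0) :
    ∑ w : W, sgn (ip l ↑w) = (Fintype.card W : ℝ) := by
  classical
  rw [char_sum0 W l, if_pos hl]

lemma char_sum_zero (W : Submodule F2 ((Fin n × Fin b) → F2)) [Fintype W]
    (l : (Fin n × Fin b) → F2) (hl : ¬ ∀ w ∈ W, ip l w = 0) :
    ∑ w : W, sgn (ip l ↑w) = 0 := by
  classical
  rw [char_sum0 W l, if_neg hl]

def Phi {n b : ℕ} (α : Finset (Fin n)) (F : {i // i ∈ α} → Finset (Fin b)) :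
    (Fin n × Fin b) → F2 :=
  fun p => if h : p.1 ∈ α then (if p.2 ∈ F ⟨p.1, h⟩ then 1 else 0) else 0

lemma Phi_injective {n b : ℕ} (α : Finset (Fin n)) :
    Function.Injective (Phi (n := n) (b := b) α) := by
  intro F F' h
  funext i
  ext j
  have hc := congrFun h (↑i, j)
  simp only [Phi, dif_pos i.2, Subtype.coe_eta] at hc
  constructor <;> intro hj
  · by_contra hj'
    rw [if_pos hj, if_neg hj'] at hc
    exact one_ne_zero hc
  · by_contra hj'
    rw [if_neg hj', if_pos hj] at hc
    exact one_ne_zero hc.symm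

lemma Phi_mem_suppSub {n b : ℕ} (A : AffineSubspace F2 ((Fin n × Fin b) → F2))
    (α : Finset (Fin n)) (F : {i // i ∈ α} → Finset (Fin b))
    (hF : ∀ v ∈ A.direction, ip (Phi α F) v = 0) : Phi α F ∈ suppSub A α := by
  refine ⟨hF, fun p hp => ?_⟩
  simp only [Phi, dif_neg hp]

lemma ipPhi {n b : ℕ} (α : Finset (Fin n)) (F : {i // i ∈ α} → Finset (Fin b))
    (x : (Fin n × Fin b) → F2) :
    ip (Phi α F) x = ∑ i : {i // i ∈ α}, ∑ j ∈ F i, x (↑i, j) := by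
  classical
  have h2 : ∀ i ∈ Finset.univ, i ∉ α → (∑ j : Fin b, Phi α F (i, j) * x (i, j)) = 0 := by
    intro i _ hi
    simp [Phi, dif_neg hi]
  have h1 : ∀ i : {i // i ∈ α},
      (∑ j : Fin b, Phi α F (↑i, j) * x (↑i, j)) = ∑ j ∈ F i, x (↑i, j) := by
    intro i
    simp only [Phi, dif_pos i.2, Subtype.coe_eta, ite_mul, one_mul, zero_mul,
      Finset.sum_ite_mem, Finset.univ_inter]
  calc ip (Phi α F) x = ∑ i : Fin n, ∑ j : Fin b, Phi α F (i, j) * x (i, j) := by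
        unfold ip
        rw [Fintype.sum_prod_type]
    _ = ∑ i ∈ α, ∑ j : Fin b, Phi α F (i, j) * x (i, j) :=
        (Finset.sum_subset (Finset.subset_univ α) h2).symm
    _ = ∑ i ∈ α.attach, ∑ j : Fin b, Phi α F (↑i, j) * x (↑i, j) :=
        (Finset.sum_attach α _).symm
    _ = ∑ i : {i // i ∈ α}, ∑ j ∈ F i, x (↑i, j) := by
        rw [← Finset.univ_eq_attach]
        exact Finset.sum_congr rfl fun i _ => h1 i

def blk0 {ι : Type*} {b : ℕ} (x : (ι × Fin b) → F2) (i : ι) : Fin b → F2 := fun j => x (i, j)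

lemma prod_sgn_eq {n b : ℕ} (g : (Fin b → F2) → F2) (α : Finset (Fin n))
    (x : (Fin n × Fin b) → F2) :
    ∏ i ∈ α, sgn (g (blk0 x i)) =
      ∑ F : {i // i ∈ α} → Finset (Fin b),
        (∏ i : {i // i ∈ α}, hatFC g (F i)) * sgn (ip (Phi α F) x) := by
  classical
  calc ∏ i ∈ α, sgn (g (blk0 x i))
      = ∏ i ∈ α.attach, sgn (g (blk0 x ↑i)) := (Finset.prod_attach α _).symm
    _ = ∏ i : {i // i ∈ α}, ∑ S ∈ (Finset.univ : Finset (Finset (Fin b))),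
          hatFC g S * sgn (∑ j ∈ S, blk0 x ↑i j) := by
        rw [← Finset.univ_eq_attach]
        exact Finset.prod_congr rfl fun i _ => fourier_inv g (blk0 x ↑i)
    _ = ∑ F ∈ Fintype.piFinset (fun _ : {i // i ∈ α} => (Finset.univ : Finset (Finset (Fin b)))),
          ∏ i : {i // i ∈ α}, (hatFC g (F i) * sgn (∑ j ∈ F i, blk0 x ↑i j)) :=
        Finset.prod_univ_sum _ _
    _ = ∑ F : {i // i ∈ α} → Finset (Fin b),
        (∏ i : {i // i ∈ α}, hatFC g (F i)) * sgn (ip (Phi α F) x) := by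
        rw [Fintype.piFinset_univ]
        refine Finset.sum_congr rfl fun F _ => ?_
        rw [Finset.prod_mul_distrib]
        congr 1
        rw [ipPhi, sgn_sum]
        exact Finset.prod_congr rfl fun i _ => rfl

lemma Qbound {n b : ℕ} (g : (Fin b → F2) → F2) (δ : ℝ) (hδ0 : 0 ≤ δ)
    (hδ : ∀ S : Finset (Fin b), |hatFC g S| ≤ δ)
    (A : AffineSubspace F2 ((Fin n × Fin b) → F2)) [Fintype A.direction]
    (hAsafe : IsSafeAffine A) (x₀ : (Fin n × Fin b) → F2) (α : Finset (Fin n)) :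
    |∑ w : A.direction, ∏ i ∈ α, sgn (g (blk0 (x₀ + (w : (Fin n × Fin b) → F2)) i))|
      ≤ (Fintype.card A.direction : ℝ) * (2 * δ) ^ α.card := by
  classical
  have hcW0 : (0:ℝ) ≤ (Fintype.card A.direction : ℝ) := Nat.cast_nonneg _
  have hswap : (∑ w : A.direction, ∏ i ∈ α, sgn (g (blk0 (x₀ + (w : (Fin n × Fin b) → F2)) i)))
      = ∑ F : {i // i ∈ α} → Finset (Fin b),
          (∏ i : {i // i ∈ α}, hatFC g (F i)) * (sgn (ip (Phi α F) x₀) *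
            (if ∀ v ∈ A.direction, ip (Phi α F) v = 0 then (Fintype.card A.direction : ℝ) else 0)) := by
    have e0 : (∑ w : A.direction, ∏ i ∈ α, sgn (g (blk0 (x₀ + (w : (Fin n × Fin b) → F2)) i)))
        = ∑ w : A.direction, ∑ F : {i // i ∈ α} → Finset (Fin b),
            (∏ i : {i // i ∈ α}, hatFC g (F i)) *
              sgn (ip (Phi α F) (x₀ + (w : (Fin n × Fin b) → F2))) :=
      Finset.sum_congr rfl fun w _ => prod_sgn_eq g α _
    rw [e0, Finset.sum_comm]
    refine Finset.sum_congr rfl fun F _ => ?_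
    by_cases hF : ∀ v ∈ A.direction, ip (Phi α F) v = 0
    · rw [if_pos hF, ← char_sum_card A.direction (Phi α F) hF, Finset.mul_sum, Finset.mul_sum]
      refine Finset.sum_congr rfl fun w _ => ?_
      rw [ip_add_right, sgn_add]
    · rw [if_neg hF, show (0:ℝ) = ∑ w : A.direction, sgn (ip (Phi α F) ↑w) from
        (char_sum_zero A.direction (Phi α F) hF).symm, Finset.mul_sum, Finset.mul_sum]
      refine Finset.sum_congr rfl fun w _ => ?_
      rw [ip_add_right, sgn_add]
  rw [hswap]
  have hterm : ∀ F : {i // i ∈ α} → Finset (Fin b),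
      |(∏ i : {i // i ∈ α}, hatFC g (F i)) * (sgn (ip (Phi α F) x₀) *
        (if ∀ v ∈ A.direction, ip (Phi α F) v = 0 then (Fintype.card A.direction : ℝ) else 0))|
      ≤ δ ^ α.card * (if ∀ v ∈ A.direction, ip (Phi α F) v = 0 then (Fintype.card A.direction : ℝ) else 0) := by
    intro F
    rw [abs_mul, abs_mul]
    have h1 : |∏ i : {i // i ∈ α}, hatFC g (F i)| ≤ δ ^ α.card := by
      rw [Finset.abs_prod]
      calc ∏ i : {i // i ∈ α}, |hatFC g (F i)|
          ≤ ∏ _i : {i // i ∈ α}, δ :=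
            Finset.prod_le_prod (fun i _ => abs_nonneg _) (fun i _ => hδ (F i))
        _ = δ ^ α.card := by rw [Finset.prod_const, Finset.card_univ, Fintype.card_coe]
    have h2 : |sgn (ip (Phi α F) x₀)| = 1 := abs_sgn _
    have h3 : |if ∀ v ∈ A.direction, ip (Phi α F) v = 0 then (Fintype.card A.direction : ℝ) else 0|
        = (if ∀ v ∈ A.direction, ip (Phi α F) v = 0 then (Fintype.card A.direction : ℝ) else 0) := by
      split_ifs
      · exact abs_of_nonneg hcW0
      · exact abs_zero
    have h4 : (0:ℝ) ≤ (if ∀ v ∈ A.direction, ip (Phi α F) v = 0 then (Fintype.card A.direction : ℝ) else 0) := by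
      split_ifs
      · exact hcW0
      · exact le_rfl
    rw [h2, h3, one_mul]
    exact mul_le_mul_of_nonneg_right h1 h4
  have h5 : (∑ F : {i // i ∈ α} → Finset (Fin b),
        (if ∀ v ∈ A.direction, ip (Phi α F) v = 0 then (Fintype.card A.direction : ℝ) else 0))
      = ((Finset.univ.filter (fun F : {i // i ∈ α} → Finset (Fin b) =>
          ∀ v ∈ A.direction, ip (Phi α F) v = 0)).card : ℝ) * (Fintype.card A.direction : ℝ) := by
    rw [← Finset.sum_filter, Finset.sum_const, nsmul_eq_mul]
  have h6 : (Finset.univ.filter (fun F : {i // i ∈ α} → Finset (Fin b) =>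
      ∀ v ∈ A.direction, ip (Phi α F) v = 0)).card ≤ 2 ^ α.card := by
    have hmaps : ∀ F ∈ Finset.univ.filter (fun F : {i // i ∈ α} → Finset (Fin b) =>
        ∀ v ∈ A.direction, ip (Phi α F) v = 0),
        Phi α F ∈ Finset.univ.filter (fun l => l ∈ suppSub A α) := by
      intro F hF
      simp only [Finset.mem_filter, Finset.mem_univ, true_and] at hF ⊢
      exact Phi_mem_suppSub A α F hF
    calc (Finset.univ.filter (fun F : {i // i ∈ α} → Finset (Fin b) =>
          ∀ v ∈ A.direction, ip (Phi α F) v = 0)).card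
        ≤ (Finset.univ.filter (fun l => l ∈ suppSub A α)).card :=
          Finset.card_le_card_of_injOn (Phi α) hmaps ((Phi_injective α).injOn)
      _ = Fintype.card (suppSub A α) := (Fintype.card_subtype _).symm
      _ ≤ 2 ^ α.card := card_suppSub_le A hAsafe α
  calc |∑ F : {i // i ∈ α} → Finset (Fin b),
        (∏ i : {i // i ∈ α}, hatFC g (F i)) * (sgn (ip (Phi α F) x₀) *
          (if ∀ v ∈ A.direction, ip (Phi α F) v = 0 then (Fintype.card A.direction : ℝ) else 0))|
      ≤ ∑ F : {i // i ∈ α} → Finset (Fin b),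
        |(∏ i : {i // i ∈ α}, hatFC g (F i)) * (sgn (ip (Phi α F) x₀) *
          (if ∀ v ∈ A.direction, ip (Phi α F) v = 0 then (Fintype.card A.direction : ℝ) else 0))| :=
        Finset.abs_sum_le_sum_abs _ _
    _ ≤ ∑ F : {i // i ∈ α} → Finset (Fin b),
        δ ^ α.card * (if ∀ v ∈ A.direction, ip (Phi α F) v = 0 then (Fintype.card A.direction : ℝ) else 0) :=
        Finset.sum_le_sum (fun F _ => hterm F)
    _ = δ ^ α.card * (((Finset.univ.filter (fun F : {i // i ∈ α} → Finset (Fin b) =>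
          ∀ v ∈ A.direction, ip (Phi α F) v = 0)).card : ℝ) * (Fintype.card A.direction : ℝ)) := by
        rw [← Finset.mul_sum, h5]
    _ ≤ δ ^ α.card * (((2:ℝ) ^ α.card) * (Fintype.card A.direction : ℝ)) := by
        apply mul_le_mul_of_nonneg_left _ (by positivity)
        apply mul_le_mul_of_nonneg_right _ hcW0
        exact_mod_cast h6
    _ = (Fintype.card A.direction : ℝ) * (2 * δ) ^ α.card := by
        rw [mul_pow]
        ring

end Aux


/-- equidistribution count for a safe affine subspace
(Lemma `exponential_sum`, stated with explicit error `E = (1+2δ)^n − 1`). -/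
theorem stmt0 {n b : ℕ} (hn : 0 < n) (hb : 0 < b)
    (g : (Fin b → F2) → F2) (δ : ℝ) (hδ0 : 0 ≤ δ)
    (hδ : ∀ S : Finset (Fin b), |hatFC g S| ≤ δ)
    (E : ℝ) (hE : E = (1 + 2 * δ) ^ n - 1)
    (A : AffineSubspace F2 ((Fin n × Fin b) → F2))
    (hAne : (A : Set ((Fin n × Fin b) → F2)).Nonempty)
    (hAsafe : IsSafeAffine A)
    (m : ℕ) (hm : m = codim A)
    (z : Fin n → F2) :
    abs ((((A : Set ((Fin n × Fin b) → F2)) ∩ {x | liftG g x = z}).ncard : ℝ)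
        - (2 : ℝ) ^ (n * b) / (2 : ℝ) ^ (n + m))
      ≤ E * ((2 : ℝ) ^ (n * b) / (2 : ℝ) ^ (n + m)) := by
  classical
  obtain ⟨x₀, hx₀⟩ := hAne
  letI : Fintype A.direction := Fintype.ofFinite _
  set d := Module.finrank F2 A.direction with hd
  have hdle : d ≤ n * b := by
    have h1 := Submodule.finrank_le A.direction
    rwa [Module.finrank_pi, Fintype.card_prod, Fintype.card_fin, Fintype.card_fin] at h1
  have hmval : m = n * b - d := by
    rw [hm]
    unfold codim
    rw [Fintype.card_fin]
  have hmd : m + d = n * b := by omega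
  have hcardW : (Fintype.card A.direction : ℝ) = 2 ^ d := by
    have h2 := Module.card_eq_pow_finrank (K := F2) (V := A.direction)
    rw [ZMod.card 2] at h2
    exact_mod_cast h2
  have hratio : (2:ℝ) ^ (n*b) / (2:ℝ) ^ (n+m)
      = (Fintype.card A.direction : ℝ) / 2 ^ n := by
    rw [hcardW, ← hmd, pow_add, pow_add]
    have : ((2:ℝ)^n) ≠ 0 := by positivity
    have : ((2:ℝ)^m) ≠ 0 := by positivity
    field_simp
  have hcount : ((((A : Set ((Fin n × Fin b) → F2)) ∩ {x | liftG g x = z}).ncard : ℕ) : ℝ)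
      = ∑ w : A.direction,
          (if liftG g (x₀ + (w : (Fin n × Fin b) → F2)) = z then (1:ℝ) else 0) := by
    rw [Set.ncard_eq_toFinset_card' _]
    have hbij : (Finset.univ.filter (fun w : A.direction =>
          liftG g (x₀ + (w : (Fin n × Fin b) → F2)) = z)).card
        = ((A : Set ((Fin n × Fin b) → F2)) ∩ {x | liftG g x = z}).toFinset.card := by
      apply Finset.card_bij (fun (w : A.direction) _ => x₀ + (w : (Fin n × Fin b) → F2))
      · intro w hw
        rw [Finset.mem_filter] at hw
        rw [Set.mem_toFinset]
        constructor
        · have hmem : (w : (Fin n × Fin b) → F2) +ᵥ x₀ ∈ A :=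
            AffineSubspace.vadd_mem_of_mem_direction w.2 hx₀
          rwa [vadd_eq_add, add_comm] at hmem
        · exact hw.2
      · intro w _ w' _ hww
        exact Subtype.ext (add_left_cancel hww)
      · intro x hx
        rw [Set.mem_toFinset] at hx
        obtain ⟨hxA, hxz⟩ := hx
        have hv : x - x₀ ∈ A.direction := by
          have := AffineSubspace.vsub_mem_direction hxA hx₀
          rwa [vsub_eq_sub] at this
        refine ⟨⟨x - x₀, hv⟩, ?_, by rw [add_comm, sub_add_cancel]⟩
        rw [Finset.mem_filter]
        refine ⟨Finset.mem_univ _, ?_⟩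
        have : x₀ + (x - x₀) = x := by rw [add_comm, sub_add_cancel]
        rw [this, hxz]
    rw [← hbij]
    exact (Finset.sum_boole _ _).symm
  have key2n : ∀ x : (Fin n × Fin b) → F2,
      (2:ℝ)^n * (if liftG g x = z then (1:ℝ) else 0)
        = ∑ α : Finset (Fin n), sgn (∑ i ∈ α, (liftG g x i + z i)) := by
    intro x
    have hss := sum_sgn_subsets (fun i => liftG g x i + z i)
    rw [Fintype.card_fin] at hss
    rw [hss]
    have : ((fun i => liftG g x i + z i) = 0) ↔ liftG g x = z := by
      constructor
      · intro hxy
        funext i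
        exact (F2_add_eq_zero _ _).1 (congrFun hxy i)
      · intro hxy
        subst hxy
        funext i
        exact (F2_add_eq_zero _ _).2 rfl
    simp only [this]
    split_ifs <;> ring
  have hfactor : ∀ (x : (Fin n × Fin b) → F2) (α : Finset (Fin n)),
      sgn (∑ i ∈ α, (liftG g x i + z i))
        = (∏ i ∈ α, sgn (g (blk0 x i))) * sgn (∑ i ∈ α, z i) := by
    intro x α
    rw [Finset.sum_add_distrib, sgn_add, sgn_sum]
    rfl
  have h2n : (2:ℝ)^n * (∑ w : A.direction,
        (if liftG g (x₀ + (w : (Fin n × Fin b) → F2)) = z then (1:ℝ) else 0))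
      = ∑ α : Finset (Fin n),
          (∑ w : A.direction, ∏ i ∈ α, sgn (g (blk0 (x₀ + (w : (Fin n × Fin b) → F2)) i)))
            * sgn (∑ i ∈ α, z i) := by
    rw [Finset.mul_sum]
    have e1 : ∀ w : A.direction,
        (2:ℝ)^n * (if liftG g (x₀ + (w : (Fin n × Fin b) → F2)) = z then (1:ℝ) else 0)
        = ∑ α : Finset (Fin n),
            (∏ i ∈ α, sgn (g (blk0 (x₀ + (w : (Fin n × Fin b) → F2)) i)))
              * sgn (∑ i ∈ α, z i) := by
      intro w
      rw [key2n]
      exact Finset.sum_congr rfl fun α _ => hfactor _ α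
    rw [Finset.sum_congr rfl fun w _ => e1 w, Finset.sum_comm]
    exact Finset.sum_congr rfl fun α _ => (Finset.sum_mul _ _ _).symm
  have hbinom : (∑ α : Finset (Fin n), (2*δ) ^ α.card) = (1 + 2*δ)^n := by
    have hpa := Finset.prod_add (fun _ : Fin n => 2*δ) (fun _ : Fin n => (1:ℝ)) Finset.univ
    rw [Finset.prod_const, Finset.card_univ, Fintype.card_fin, Finset.powerset_univ] at hpa
    calc (∑ α : Finset (Fin n), (2*δ) ^ α.card)
        = ∑ α : Finset (Fin n), (∏ _i ∈ α, (2*δ)) * ∏ _i ∈ Finset.univ \ α, (1:ℝ) := by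
          refine Finset.sum_congr rfl fun α _ => ?_
          rw [Finset.prod_const, Finset.prod_const_one, mul_one]
      _ = (2*δ + 1)^n := hpa.symm
      _ = (1 + 2*δ)^n := by ring
  have hmain : |(2:ℝ)^n * (∑ w : A.direction,
        (if liftG g (x₀ + (w : (Fin n × Fin b) → F2)) = z then (1:ℝ) else 0))
        - (Fintype.card A.direction : ℝ)|
      ≤ ((1 + 2*δ)^n - 1) * (Fintype.card A.direction : ℝ) := by
    rw [h2n]
    have hempty : (∑ w : A.direction,
          ∏ i ∈ (∅ : Finset (Fin n)), sgn (g (blk0 (x₀ + (w : (Fin n × Fin b) → F2)) i)))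
          * sgn (∑ i ∈ (∅ : Finset (Fin n)), z i) = (Fintype.card A.direction : ℝ) := by
      simp [sgn_zero, Finset.card_univ]
    rw [← Finset.add_sum_erase _ _ (Finset.mem_univ (∅ : Finset (Fin n))), hempty]
    have hgoal1 : (Fintype.card A.direction : ℝ)
        + (∑ α ∈ Finset.univ.erase (∅ : Finset (Fin n)),
            (∑ w : A.direction, ∏ i ∈ α, sgn (g (blk0 (x₀ + (w : (Fin n × Fin b) → F2)) i)))
              * sgn (∑ i ∈ α, z i))
        - (Fintype.card A.direction : ℝ)
        = ∑ α ∈ Finset.univ.erase (∅ : Finset (Fin n)),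
            (∑ w : A.direction, ∏ i ∈ α, sgn (g (blk0 (x₀ + (w : (Fin n × Fin b) → F2)) i)))
              * sgn (∑ i ∈ α, z i) := by ring
    rw [hgoal1]
    have hQ : ∀ α : Finset (Fin n),
        |(∑ w : A.direction, ∏ i ∈ α, sgn (g (blk0 (x₀ + (w : (Fin n × Fin b) → F2)) i)))
          * sgn (∑ i ∈ α, z i)|
        ≤ (Fintype.card A.direction : ℝ) * (2*δ) ^ α.card := by
      intro α
      rw [abs_mul, abs_sgn, mul_one]
      exact Qbound g δ hδ0 hδ A hAsafe x₀ α
    calc |∑ α ∈ Finset.univ.erase (∅ : Finset (Fin n)),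
            (∑ w : A.direction, ∏ i ∈ α, sgn (g (blk0 (x₀ + (w : (Fin n × Fin b) → F2)) i)))
              * sgn (∑ i ∈ α, z i)|
        ≤ ∑ α ∈ Finset.univ.erase (∅ : Finset (Fin n)),
            |(∑ w : A.direction, ∏ i ∈ α, sgn (g (blk0 (x₀ + (w : (Fin n × Fin b) → F2)) i)))
              * sgn (∑ i ∈ α, z i)| := Finset.abs_sum_le_sum_abs _ _
      _ ≤ ∑ α ∈ Finset.univ.erase (∅ : Finset (Fin n)),
            (Fintype.card A.direction : ℝ) * (2*δ) ^ α.card :=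
          Finset.sum_le_sum fun α _ => hQ α
      _ = (Fintype.card A.direction : ℝ)
            * ∑ α ∈ Finset.univ.erase (∅ : Finset (Fin n)), (2*δ) ^ α.card := by
          rw [Finset.mul_sum]
      _ = ((1 + 2*δ)^n - 1) * (Fintype.card A.direction : ℝ) := by
          have he : (∑ α ∈ Finset.univ.erase (∅ : Finset (Fin n)), (2*δ) ^ α.card)
              = (1 + 2*δ)^n - 1 := by
            have := Finset.add_sum_erase Finset.univ (fun α : Finset (Fin n) => (2*δ) ^ α.card)
              (Finset.mem_univ (∅ : Finset (Fin n)))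
            rw [hbinom] at this  -- maybe direction
            simp only [Finset.card_empty, pow_zero] at this
            linarith
          rw [he]
          ring
  -- final assembly
  rw [hcount, hratio, hE]
  have h2npos : (0:ℝ) < 2^n := by positivity
  set T : ℝ := ∑ w : A.direction,
      (if liftG g (x₀ + (w : (Fin n × Fin b) → F2)) = z then (1:ℝ) else 0) with hT
  have hsplit : T - (Fintype.card A.direction : ℝ) / 2^n
      = ((2:ℝ)^n * T - (Fintype.card A.direction : ℝ)) / 2^n := by
    field_simp
  rw [hsplit, abs_div, abs_of_pos h2npos]
  rw [div_le_iff₀ h2npos]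
  calc |(2:ℝ)^n * T - (Fintype.card A.direction : ℝ)|
      ≤ ((1 + 2*δ)^n - 1) * (Fintype.card A.direction : ℝ) := hmain
    _ = ((1 + 2*δ)^n - 1) * ((Fintype.card A.direction : ℝ) / 2^n) * 2^n := by
        field_simp
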